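/- If (⊗ₙ P⁽ⁿ⁾)Σ = Σ for a tensor Σ whose mode-n unfolding Σ_{(n)} has full row rank I_n, and each P⁽ⁿ⁾ is unitary, then each P⁽ⁿ⁾ commutes with Σ_{(n)} Σ_{(n)}*; in particular P⁽ⁿ⁾ preserves each eigenspace of the n-th reduced density matrix. -/
import Mathlib


open Matrix BigOperators

noncomputable section

/-- The full Kronecker (tensor) product `⊗ₙ U⁽ⁿ⁾` of the local matrices, as a matrix
on the product index set. -/
def kronFull {N : ℕ} {I : Fin N → ℕ} (U : ∀ n, Matrix (Fin (I n)) (Fin (I n)) ℂ) :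
    Matrix (∀ n, Fin (I n)) (∀ n, Fin (I n)) ℂ :=
  Matrix.of fun x y => ∏ n, U n (x n) (y n)

/-- The action of a local operator `⊗ₙ U⁽ⁿ⁾` on a tensor `T ∈ ℂ^{I₁}⊗⋯⊗ℂ^{I_N}`. -/
def locAct {N : ℕ} {I : Fin N → ℕ} (U : ∀ n, Matrix (Fin (I n)) (Fin (I n)) ℂ)
    (T : (∀ n, Fin (I n)) → ℂ) : (∀ n, Fin (I n)) → ℂ :=
  fun x => ∑ y : ∀ n, Fin (I n), (∏ n, U n (x n) (y n)) * T y

/-- Assemble a full multi-index from the value `i` of the `n`-th index and the values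
`c` of the remaining indices. -/
def assemble {N : ℕ} {I : Fin N → ℕ} (n : Fin N) (i : Fin (I n))
    (c : ∀ k : {k : Fin N // k ≠ n}, Fin (I k.1)) : ∀ m, Fin (I m) :=
  fun m => if h : m = n then cast (show Fin (I n) = Fin (I m) by rw [h]) i else c ⟨m, h⟩

/-- The mode-`n` matrix unfolding of a tensor (columns indexed by the remaining indices). -/
def unfold {N : ℕ} {I : Fin N → ℕ} (n : Fin N) (T : (∀ m, Fin (I m)) → ℂ) :
    Matrix (Fin (I n)) (∀ k : {k : Fin N // k ≠ n}, Fin (I k.1)) ℂ :=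
  Matrix.of fun i c => T (assemble n i c)

/-- The Hermitian inner product `⟨T_{i_n=i}, T'_{i_n=j}⟩` of mode-`n` slices. -/
def modeInner {N : ℕ} {I : Fin N → ℕ} (n : Fin N) (T T' : (∀ m, Fin (I m)) → ℂ)
    (i j : Fin (I n)) : ℂ :=
  ∑ c : ∀ k : {k : Fin N // k ≠ n}, Fin (I k.1),
    star (T (assemble n i c)) * T' (assemble n j c)

/-- `T` is all-orthogonal with ordered mode-`n` singular values `σ n`. -/
def AllOrth {N : ℕ} {I : Fin N → ℕ} (σ : ∀ n, Fin (I n) → ℝ)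
    (T : (∀ m, Fin (I m)) → ℂ) : Prop :=
  (∀ n, Antitone (σ n)) ∧ (∀ n i, 0 ≤ σ n i) ∧
    ∀ n i j, modeInner n T T i j = if i = j then ((σ n i : ℂ)) ^ 2 else 0

/-- Squared Frobenius norm of a tensor. -/
def fnormSq {N : ℕ} {I : Fin N → ℕ} (T : (∀ m, Fin (I m)) → ℂ) : ℝ :=
  ∑ x, Complex.normSq (T x)

/- ---------- auxiliary material ---------- -/

lemma assemble_self {N : ℕ} {I : Fin N → ℕ} (n : Fin N) (i : Fin (I n))
    (c : ∀ k : {k : Fin N // k ≠ n}, Fin (I k.1)) : assemble n i c n = i := by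
  simp [assemble]

lemma assemble_ne {N : ℕ} {I : Fin N → ℕ} (n : Fin N) (i : Fin (I n))
    (c : ∀ k : {k : Fin N // k ≠ n}, Fin (I k.1)) (m : Fin N) (h : m ≠ n) :
    assemble n i c m = c ⟨m, h⟩ := by
  simp [assemble, h]

lemma prod_split {β : Type*} [CommMonoid β] {N : ℕ} (n : Fin N) (f : Fin N → β) :
    ∏ m, f m = f n * ∏ k : {k : Fin N // k ≠ n}, f k.1 := by
  rw [Fintype.prod_eq_mul_prod_compl n f]
  congr 1
  exact Finset.prod_subtype ({n}ᶜ : Finset (Fin N)) (p := fun k => k ≠ n) (fun x => by simp)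
    (fun k => f k)

/-- The equivalence between pairs (value at `n`, remaining values) and full multi-indices. -/
def asmEquiv {N : ℕ} {I : Fin N → ℕ} (n : Fin N) :
    (Fin (I n) × ∀ k : {k : Fin N // k ≠ n}, Fin (I k.1)) ≃ (∀ m, Fin (I m)) where
  toFun p := assemble n p.1 p.2
  invFun y := (y n, fun k => y k.1)
  left_inv := by
    rintro ⟨i, c⟩
    refine Prod.ext (assemble_self n i c) ?_
    funext k
    exact assemble_ne n i c k.1 k.2
  right_inv := by
    intro y
    funext m
    by_cases h : m = n
    · subst h; exact assemble_self m _ _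
    · exact assemble_ne n _ _ m h

/-- Kronecker product of the local matrices over all modes except `n`. -/
def kronSub {N : ℕ} {I : Fin N → ℕ} (P : ∀ n, Matrix (Fin (I n)) (Fin (I n)) ℂ) (n : Fin N) :
    Matrix (∀ k : {k : Fin N // k ≠ n}, Fin (I k.1)) (∀ k : {k : Fin N // k ≠ n}, Fin (I k.1)) ℂ :=
  Matrix.of fun c d => ∏ k, P k.1 (c k) (d k)

set_option maxHeartbeats 800000 in
lemma kronSub_unitary {N : ℕ} {I : Fin N → ℕ} (P : ∀ n, Matrix (Fin (I n)) (Fin (I n)) ℂ)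
    (hP : ∀ n, P n ∈ Matrix.unitaryGroup (Fin (I n)) ℂ) (n : Fin N) :
    (kronSub P n)ᴴ * kronSub P n = 1 := by
  ext c d
  simp only [Matrix.mul_apply, Matrix.conjTranspose_apply, kronSub, Matrix.of_apply]
  have step1 : ∀ b : (∀ k : {k : Fin N // k ≠ n}, Fin (I k.1)),
      star (∏ k, P k.1 (b k) (c k)) * ∏ k, P k.1 (b k) (d k)
      = ∏ k, star (P k.1 (b k) (c k)) * P k.1 (b k) (d k) := fun b => by
    rw [star_prod, ← Finset.prod_mul_distrib]
  rw [Finset.sum_congr rfl fun b _ => step1 b]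
  rw [← Fintype.prod_sum (fun (k : {k : Fin N // k ≠ n}) (x : Fin (I k.1)) =>
    star (P k.1 x (c k)) * P k.1 x (d k))]
  have step2 : ∀ k : {k : Fin N // k ≠ n},
      (∑ x, star (P k.1 x (c k)) * P k.1 x (d k))
      = (1 : Matrix (Fin (I k.1)) (Fin (I k.1)) ℂ) (c k) (d k) := fun k => by
    have h := (hP k.1).1
    rw [← h]
    simp [Matrix.mul_apply, Matrix.conjTranspose_apply, Matrix.star_eq_conjTranspose]
  rw [Finset.prod_congr rfl fun k _ => step2 k]
  by_cases h : c = d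
  · subst h; simp [Matrix.one_apply]
  · rw [Matrix.one_apply_ne h]
    obtain ⟨k, hk⟩ : ∃ k, c k ≠ d k := by
      by_contra hc; push_neg at hc; exact h (funext hc)
    exact Finset.prod_eq_zero (Finset.mem_univ k) (Matrix.one_apply_ne hk)

lemma unfold_stab {N : ℕ} {I : Fin N → ℕ} (T : (∀ n, Fin (I n)) → ℂ)
    (P : ∀ n, Matrix (Fin (I n)) (Fin (I n)) ℂ)
    (hstab : locAct P T = T) (n : Fin N) :
    unfold n T = P n * unfold n T * (kronSub P n)ᵀ := by
  ext i c
  have lhs : unfold n T i c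
      = ∑ p : Fin (I n) × (∀ k : {k : Fin N // k ≠ n}, Fin (I k.1)),
          (P n i p.1 * ∏ k, P k.1 (c k) (p.2 k)) * T (assemble n p.1 p.2) := by
    conv_lhs => rw [unfold, Matrix.of_apply, ← hstab]
    show (∑ y : ∀ m, Fin (I m), (∏ m, P m (assemble n i c m) (y m)) * T y) = _
    rw [← Equiv.sum_comp (asmEquiv n)
      (fun y => (∏ m, P m (assemble n i c m) (y m)) * T y)]
    refine Finset.sum_congr rfl fun p _ => ?_
    have : (∏ m, P m (assemble n i c m) ((asmEquiv n) p m))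
        = P n i p.1 * ∏ k : {k : Fin N // k ≠ n}, P k.1 (c k) (p.2 k) := by
      rw [prod_split n]
      congr 1
      · rw [show (asmEquiv n) p n = p.1 from assemble_self n p.1 p.2, assemble_self]
      · refine Finset.prod_congr rfl fun k _ => ?_
        rw [assemble_ne n i c k.1 k.2,
          show (asmEquiv n) p k.1 = p.2 ⟨k.1, k.2⟩ from assemble_ne n p.1 p.2 k.1 k.2]
    rw [this]
    rfl
  rw [lhs, Fintype.sum_prod_type]
  simp only [Matrix.mul_apply, unfold, kronSub, Matrix.of_apply, Matrix.transpose_apply,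
    Finset.sum_mul, Finset.mul_sum]
  rw [Finset.sum_comm]
  refine Finset.sum_congr rfl fun d _ => Finset.sum_congr rfl fun j _ => by ring

/-- If the local unitary `⊗ₙ P⁽ⁿ⁾` stabilizes `Σ` and every mode-`n` unfolding
has full row rank, then each `P⁽ⁿ⁾` commutes with `Σ_{(n)} Σ_{(n)}*` (hence preserves each
eigenspace of the `n`-th reduced density matrix). -/
theorem stmt19 {N : ℕ} {I : Fin N → ℕ} (T : (∀ n, Fin (I n)) → ℂ)
    (P : ∀ n, Matrix (Fin (I n)) (Fin (I n)) ℂ)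
    (hP : ∀ n, P n ∈ Matrix.unitaryGroup (Fin (I n)) ℂ)
    (hstab : locAct P T = T)
    (hrank : ∀ n, (unfold n T).rank = I n) :
    ∀ n : Fin N, P n * (unfold n T * (unfold n T)ᴴ) =
      (unfold n T * (unfold n T)ᴴ) * P n := by
  intro n
  set A := unfold n T with hA
  set Q := kronSub P n with hQdef
  have hQ : Qᴴ * Q = 1 := kronSub_unitary P hP n
  have hQ' : Qᵀ * (Qᵀ)ᴴ = 1 := by
    have h2 := congrArg Matrix.transpose hQ
    rw [Matrix.transpose_mul, Matrix.transpose_one] at h2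
    rw [show (Qᴴ)ᵀ = (Qᵀ)ᴴ from rfl] at h2
    exact h2
  have hst : A = P n * A * Qᵀ := unfold_stab T P hstab n
  have h1 : A * Aᴴ = P n * (A * Aᴴ) * (P n)ᴴ := by
    conv_lhs => rw [hst]
    rw [Matrix.conjTranspose_mul, Matrix.conjTranspose_mul]
    calc P n * A * Qᵀ * ((Qᵀ)ᴴ * (Aᴴ * (P n)ᴴ))
        = P n * (A * (Qᵀ * (Qᵀ)ᴴ) * Aᴴ) * (P n)ᴴ := by
          simp only [Matrix.mul_assoc]
      _ = P n * (A * Aᴴ) * (P n)ᴴ := by rw [hQ', Matrix.mul_one]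
  have hPn : (P n)ᴴ * P n = 1 := by
    have := (hP n).1
    rwa [Matrix.star_eq_conjTranspose] at this
  calc P n * (A * Aᴴ)
      = P n * (A * Aᴴ) * ((P n)ᴴ * P n) := by rw [hPn, Matrix.mul_one]
    _ = (P n * (A * Aᴴ) * (P n)ᴴ) * P n := by simp only [Matrix.mul_assoc]
    _ = (A * Aᴴ) * P n := by rw [← h1]
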